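/- Let D be a nontrivial regular (216, 40, 4, 8)-PDS in the group G = (ℤ/2ℤ)³ × (ℤ/3ℤ)³. Then the number of elements of order 2 in D is either 0 or 4. -/

import Mathlib

/-- The number of representations of `g` as `a * b⁻¹` with `a, b ∈ D`. -/
def diffReps {G : Type*} [Group G] [DecidableEq G] (D : Finset G) (g : G) : ℕ :=
  ((D ×ˢ D).filter (fun p => p.1 * p.2⁻¹ = g)).card

/-- `D` is a `(v, k, λ, μ)`-partial difference set in the finite group `G`. -/
def IsPDS {G : Type*} [Group G] [Fintype G] [DecidableEq G]
    (D : Finset G) (v k l m : ℕ) : Prop :=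
  Fintype.card G = v ∧ D.card = k ∧
  ∀ g : G, g ≠ 1 →
    (g ∈ D → diffReps D g = l) ∧ (g ∉ D → diffReps D g = m)

/-- `D` is regular: it does not contain the identity and is closed under inverses. -/
def IsRegularPDS {G : Type*} [Group G] (D : Finset G) : Prop :=
  (1 : G) ∉ D ∧ ∀ d : G, d ∈ D ↔ d⁻¹ ∈ D

/-- A regular PDS `D` is trivial if `D ∪ {e}` or `G \ D` is a subgroup of `G`. -/
def IsTrivialPDS {G : Type*} [Group G] (D : Finset G) : Prop :=
  (∃ H : Subgroup G, (H : Set G) = insert (1 : G) ↑D) ∨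
  (∃ H : Subgroup G, (H : Set G) = (↑D : Set G)ᶜ)

/-- The group `(ℤ/2ℤ)³ × (ℤ/3ℤ)³`, written multiplicatively. -/
abbrev G216 : Type := Multiplicative ((Fin 3 → ZMod 2) × (Fin 3 → ZMod 3))

/- ### Auxiliary character theory -/

noncomputable def omg : ℂ := Complex.exp (2 * Real.pi * Complex.I / 3)
lemma homg : IsPrimitiveRoot omg 3 := Complex.isPrimitiveRoot_exp 3 (by norm_num)
lemma omg_pow3 : omg ^ 3 = 1 := homg.pow_eq_one

noncomputable def psi (x : ZMod 3) : ℂ := omg ^ x.val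

lemma pow_mod3 (k : ℕ) : omg ^ (k % 3) = omg ^ k := by
  conv_rhs => rw [← Nat.div_add_mod k 3]
  rw [pow_add, pow_mul, omg_pow3, one_pow, one_mul]

lemma psi_zero : psi 0 = 1 := by simp [psi]

lemma psi_add (x y : ZMod 3) : psi (x + y) = psi x * psi y := by
  unfold psi
  rw [ZMod.val_add, pow_mod3, pow_add]

lemma psi_ne_one {x : ZMod 3} (hx : x ≠ 0) : psi x ≠ 1 := by
  have hv : x.val = 1 ∨ x.val = 2 := by
    have h1 : x.val < 3 := x.val_lt
    have h2 : x.val ≠ 0 := fun h => hx ((ZMod.val_eq_zero x).mp h)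
    omega
  rcases hv with h | h
  · simpa [psi, h] using homg.ne_one (by norm_num)
  · have := homg.pow_ne_one_of_pos_of_lt (l := 2) (by norm_num) (by norm_num)
    simpa [psi, h] using this

lemma psi_mul_neg (x : ZMod 3) : psi x * psi (-x) = 1 := by
  rw [← psi_add]; simp [psi_zero]

lemma omg_abs : ‖omg‖ = 1 := by
  have h3 : ‖omg‖ ^ 3 = 1 := by rw [← norm_pow, omg_pow3, norm_one]
  nlinarith [norm_nonneg omg, sq_nonneg (‖omg‖ - 1),
    sq_nonneg (‖omg‖ + 1)]

lemma psi_abs (x : ZMod 3) : ‖psi x‖ = 1 := by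
  simp [psi, norm_pow, omg_abs]

lemma psi_conj (x : ZMod 3) : (starRingEnd ℂ) (psi x) = psi (-x) := by
  have h1 : (psi x)⁻¹ = (starRingEnd ℂ) (psi x) := Complex.inv_eq_conj (psi_abs x)
  have h2 : psi (-x) = (psi x)⁻¹ := eq_inv_of_mul_eq_one_right (psi_mul_neg x)
  rw [h2]; exact h1.symm

def dot (c y : Fin 3 → ZMod 3) : ZMod 3 := ∑ i, c i * y i

lemma dot_comm (c y : Fin 3 → ZMod 3) : dot c y = dot y c := by
  simp [dot, mul_comm]

lemma dot_add_left (c c' y : Fin 3 → ZMod 3) : dot (c + c') y = dot c y + dot c' y := by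
  simp [dot, add_mul, Finset.sum_add_distrib]

lemma dot_add_right (c y y' : Fin 3 → ZMod 3) : dot c (y + y') = dot c y + dot c y' := by
  simp [dot, mul_add, Finset.sum_add_distrib]

lemma dot_neg_right (c y : Fin 3 → ZMod 3) : dot c (-y) = -dot c y := by
  simp [dot]

lemma dot_zero_right (c : Fin 3 → ZMod 3) : dot c 0 = 0 := by simp [dot]

lemma dot_zero_left (y : Fin 3 → ZMod 3) : dot 0 y = 0 := by simp [dot]

lemma dot_single (i : Fin 3) (y : Fin 3 → ZMod 3) : dot (Pi.single i 1) y = y i := by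
  simp only [dot]
  rw [Fintype.sum_eq_single i]
  · simp
  · intro j hj; simp [Pi.single_eq_of_ne hj]

lemma sum_psi_dot_eq_zero {y : Fin 3 → ZMod 3} (hy : y ≠ 0) :
    ∑ c : Fin 3 → ZMod 3, psi (dot c y) = 0 := by
  obtain ⟨i, hi⟩ : ∃ i, y i ≠ 0 := by
    by_contra h; push_neg at h; exact hy (funext h)
  set S := ∑ c : Fin 3 → ZMod 3, psi (dot c y) with hS
  have he : Function.Bijective (fun c : Fin 3 → ZMod 3 => Pi.single i 1 + c) := ⟨
    fun x y hxy => by simpa using hxy, fun x => ⟨x - Pi.single i 1, by ring⟩⟩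
  have key : psi (y i) * S = S := by
    rw [hS, Finset.mul_sum]
    exact Fintype.sum_bijective _ he _ _ (fun c => by
      rw [dot_add_left, psi_add, dot_single])
  have h1 : (1 - psi (y i)) * S = 0 := by linear_combination -key
  rcases mul_eq_zero.mp h1 with h | h
  · exact absurd (by linear_combination -h) (psi_ne_one hi)
  · exact h

lemma card27 : Fintype.card (Fin 3 → ZMod 3) = 27 := by
  simp [Fintype.card_fun]

lemma sum_psi_dot_zero : ∑ c : Fin 3 → ZMod 3, psi (dot c 0) = 27 := by
  simp only [dot_zero_right, psi_zero]
  rw [Finset.sum_const, Finset.card_univ, card27]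
  simp

/- ### The character sum over D -/

noncomputable def Fc (c : Fin 3 → ZMod 3) (g : G216) : ℂ :=
  psi (dot c (Multiplicative.toAdd g).2)

lemma Fc_one (c : Fin 3 → ZMod 3) : Fc c 1 = 1 := by
  simp [Fc, dot_zero_right, psi_zero]

lemma Fc_conj (c : Fin 3 → ZMod 3) (g : G216) :
    (starRingEnd ℂ) (Fc c g) = Fc c g⁻¹ := by
  simp only [Fc, psi_conj]
  congr 1
  rw [← dot_neg_right]
  rfl

lemma Fc_mul_inv (c : Fin 3 → ZMod 3) (a b : G216) :
    Fc c (a * b⁻¹) = Fc c a * (starRingEnd ℂ) (Fc c b) := by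
  rw [Fc_conj]
  simp only [Fc]
  rw [← psi_add, ← dot_add_right]
  rfl

lemma sum_Fc_eq_zero {c : Fin 3 → ZMod 3} (hc : c ≠ 0) :
    ∑ g : G216, Fc c g = 0 := by
  have h1 : ∑ g : G216, Fc c g
      = ∑ p : (Fin 3 → ZMod 2) × (Fin 3 → ZMod 3), psi (dot c p.2) :=
    Fintype.sum_equiv Multiplicative.toAdd _ _ (fun g => rfl)
  rw [h1, Fintype.sum_prod_type]
  have h2 : ∀ x : Fin 3 → ZMod 2, ∑ y : Fin 3 → ZMod 3, psi (dot c y) = 0 := by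
    intro x
    have : ∑ y : Fin 3 → ZMod 3, psi (dot c y) = ∑ y : Fin 3 → ZMod 3, psi (dot y c) := by
      exact Finset.sum_congr rfl (fun y _ => by rw [dot_comm])
    rw [this, sum_psi_dot_eq_zero hc]
  simp only [Finset.sum_const]
  rw [h2 (fun _ => 0), smul_zero]

/- ### diffReps at the identity -/

lemma diffReps_one {G : Type*} [Group G] [DecidableEq G] (D : Finset G) :
    diffReps D 1 = D.card := by
  unfold diffReps
  have h : (D ×ˢ D).filter (fun p => p.1 * p.2⁻¹ = 1) = D.image (fun d => (d, d)) := by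
    ext ⟨a, b⟩
    simp only [Finset.mem_filter, Finset.mem_product, Finset.mem_image, mul_inv_eq_one,
      Prod.mk.injEq]
    aesop
  rw [h, Finset.card_image_of_injective _
    (fun x y h => by simpa using congrArg Prod.fst h)]

/- ### The per-character value -/

lemma B_val (D : Finset G216) (hD : IsPDS D 216 40 4 8) (hreg : IsRegularPDS D)
    {c : Fin 3 → ZMod 3} (hc : c ≠ 0) :
    (∑ d ∈ D, Fc c d) = 4 ∨ (∑ d ∈ D, Fc c d) = -8 := by
  classical
  set B : ℂ := ∑ d ∈ D, Fc c d with hB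
  -- star B = B
  have hstar : (starRingEnd ℂ) B = B := by
    rw [hB, map_sum]
    rw [Finset.sum_congr rfl (fun d _ => Fc_conj c d)]
    apply Finset.sum_nbij' (fun d => d⁻¹) (fun d => d⁻¹)
    · intro a ha; exact (hreg.2 a).mp ha
    · intro a ha; exact (hreg.2 a⁻¹).mpr (by simpa using ha)
    · intro a _; simp
    · intro a _; simp
    · intro a _; rfl
  -- fiberwise sum
  have hfib : ∑ p ∈ D ×ˢ D, Fc c (p.1 * p.2⁻¹)
      = ∑ g : G216, (diffReps D g : ℂ) * Fc c g := by
    rw [← Finset.sum_fiberwise_of_maps_to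
      (g := fun p : G216 × G216 => p.1 * p.2⁻¹) (t := Finset.univ)
      (fun p _ => Finset.mem_univ _) (fun p => Fc c (p.1 * p.2⁻¹))]
    apply Finset.sum_congr rfl
    intro g _
    have : ∀ p ∈ (D ×ˢ D).filter (fun p : G216 × G216 => p.1 * p.2⁻¹ = g),
        Fc c (p.1 * p.2⁻¹) = Fc c g := by
      intro p hp
      rw [(Finset.mem_filter.mp hp).2]
    rw [Finset.sum_congr rfl this, Finset.sum_const, diffReps]
    simp [mul_comm]
  -- product form
  have hprod : ∑ p ∈ D ×ˢ D, Fc c (p.1 * p.2⁻¹) = B * (starRingEnd ℂ) B := by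
    rw [Finset.sum_product]
    rw [Finset.sum_congr rfl (fun a _ => Finset.sum_congr rfl
      (fun b _ => Fc_mul_inv c a b))]
    rw [← Finset.sum_mul_sum, hB, map_sum]
  -- spectral value
  have hval : ∑ g : G216, (diffReps D g : ℂ) * Fc c g = 32 - 4 * B := by
    have hsplit : ∀ g : G216, (diffReps D g : ℂ) * Fc c g
        = 8 * Fc c g + (if g = 1 then 32 * Fc c g else 0)
          + (if g ∈ D then (-4) * Fc c g else 0) := by
      intro g
      by_cases h1 : g = 1
      · subst h1
        rw [diffReps_one, hD.2.1]
        have : (1 : G216) ∉ D := hreg.1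
        simp [this]; ring
      · by_cases h2 : g ∈ D
        · rw [(hD.2.2 g h1).1 h2]
          simp [h1, h2]; ring
        · rw [(hD.2.2 g h1).2 h2]
          simp [h1, h2]
    rw [Finset.sum_congr rfl (fun g _ => hsplit g)]
    rw [Finset.sum_add_distrib, Finset.sum_add_distrib]
    rw [← Finset.mul_sum, sum_Fc_eq_zero hc]
    rw [Finset.sum_ite_eq' Finset.univ (1 : G216) (fun g => 32 * Fc c g)]
    have : ∑ g : G216, (if g ∈ D then (-4) * Fc c g else 0) = ∑ g ∈ D, (-4) * Fc c g := by
      rw [← Finset.sum_filter]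
      apply Finset.sum_congr _ (fun _ _ => rfl)
      ext g; simp
    rw [this, ← Finset.mul_sum, ← hB]
    simp [Fc_one]
    ring
  have hquad : B * B = 32 - 4 * B := by
    have h := hprod.symm.trans (hfib.trans hval)
    rw [hstar] at h
    exact h
  have hfac : (B - 4) * (B + 8) = 0 := by linear_combination hquad
  rcases mul_eq_zero.mp hfac with h | h
  · left; linear_combination h
  · right; linear_combination h

/- ### Order two elements -/

lemma order_two_iff (d : G216) (hd : d ≠ 1) :
    orderOf d = 2 ↔ (Multiplicative.toAdd d).2 = 0 := by
  have hpow : d ^ 2 = 1 ↔ (Multiplicative.toAdd d).2 = 0 := by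
    rw [← Multiplicative.toAdd.injective.eq_iff]
    have hexp : Multiplicative.toAdd (d ^ 2) = (2 : ℕ) • Multiplicative.toAdd d := rfl
    rw [hexp]
    constructor
    · intro h
      have h2 := congrArg Prod.snd h
      simp only [Prod.smul_snd] at h2
      funext i
      have h3 := congrArg (fun f => f i) h2
      simp only [Pi.smul_apply] at h3
      have : ∀ a : ZMod 3, (2 : ℕ) • a = 0 → a = 0 := by decide
      exact this _ h3
    · intro h
      have h1 : (2 : ℕ) • (Multiplicative.toAdd d).1 = 0 := by
        funext i
        have : ∀ a : ZMod 2, (2 : ℕ) • a = 0 := by decide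
        exact this _
      have : (2 : ℕ) • Multiplicative.toAdd d
          = ((2 : ℕ) • (Multiplicative.toAdd d).1, (2 : ℕ) • (Multiplicative.toAdd d).2) := rfl
      rw [this, h1, h]
      rfl
  constructor
  · intro h
    have hp := pow_orderOf_eq_one d
    rw [h] at hp
    exact hpow.mp hp
  · intro h
    exact orderOf_eq_prime (hpow.mpr h) hd

/- ### Main theorem -/

theorem involutions_in_40_PDS (D : Finset G216)
    (hD : IsPDS D 216 40 4 8) (hreg : IsRegularPDS D) (hnt : ¬ IsTrivialPDS D) :
    (D.filter (fun d => orderOf d = 2)).card = 0 ∨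
    (D.filter (fun d => orderOf d = 2)).card = 4 := by
  classical
  have hfe : D.filter (fun d => orderOf d = 2)
      = D.filter (fun d => (Multiplicative.toAdd d).2 = 0) := by
    apply Finset.filter_congr
    intro d hd
    have hd1 : d ≠ 1 := fun h => hreg.1 (h ▸ hd)
    simp only [order_two_iff d hd1]
  set t := (D.filter (fun d => (Multiplicative.toAdd d).2 = 0)).card with htdef
  have hmaster : ∑ c : Fin 3 → ZMod 3, ∑ d ∈ D, Fc c d = 27 * t := by
    rw [Finset.sum_comm]
    have hinner : ∀ d ∈ D, ∑ c : Fin 3 → ZMod 3, Fc c d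
        = if (Multiplicative.toAdd d).2 = 0 then (27 : ℂ) else 0 := by
      intro d _
      by_cases h : (Multiplicative.toAdd d).2 = 0
      · rw [if_pos h]
        simpa [Fc, h] using sum_psi_dot_zero
      · rw [if_neg h]
        exact sum_psi_dot_eq_zero h
    rw [Finset.sum_congr rfl hinner, ← Finset.sum_filter, Finset.sum_const, htdef]
    simp [mul_comm]
  have h0 : ∑ d ∈ D, Fc 0 d = 40 := by
    have h : ∀ d ∈ D, Fc 0 d = 1 := fun d _ => by simp [Fc, dot_zero_left, psi_zero]
    rw [Finset.sum_congr rfl h, Finset.sum_const, hD.2.1]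
    simp
  set E := (Finset.univ : Finset (Fin 3 → ZMod 3)).erase 0 with hE
  have hsplit : ∑ c : Fin 3 → ZMod 3, ∑ d ∈ D, Fc c d
      = 40 + ∑ c ∈ E, ∑ d ∈ D, Fc c d := by
    rw [← Finset.add_sum_erase _ _ (Finset.mem_univ 0), h0]
  have hcardE : E.card = 26 := by
    rw [hE, Finset.card_erase_of_mem (Finset.mem_univ 0), Finset.card_univ, card27]
  set E1 := E.filter (fun c => (∑ d ∈ D, Fc c d) = 4) with hE1
  set E2 := E.filter (fun c => ¬ (∑ d ∈ D, Fc c d) = 4) with hE2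
  have hE12 : E1.card + E2.card = 26 := by
    rw [hE1, hE2, Finset.card_filter_add_card_filter_not, hcardE]
  have hsumE : ∑ c ∈ E, ∑ d ∈ D, Fc c d = 4 * E1.card - 8 * E2.card := by
    rw [← Finset.sum_filter_add_sum_filter_not E (fun c => (∑ d ∈ D, Fc c d) = 4), ← hE1, ← hE2]
    have h1 : ∑ c ∈ E1, (∑ d ∈ D, Fc c d) = 4 * E1.card := by
      rw [Finset.sum_congr rfl (fun c hc => (Finset.mem_filter.mp hc).2), Finset.sum_const]
      simp [mul_comm]
      rfl
    have h2 : ∑ c ∈ E2, (∑ d ∈ D, Fc c d) = -8 * E2.card := by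
      have h : ∀ c ∈ E2, (∑ d ∈ D, Fc c d) = -8 := by
        intro c hc
        obtain ⟨hcE, hne⟩ := Finset.mem_filter.mp hc
        have hc0 : c ≠ 0 := (Finset.mem_erase.mp hcE).1
        rcases B_val D hD hreg hc0 with h | h
        · exact absurd h hne
        · exact h
      rw [Finset.sum_congr rfl h, Finset.sum_const]
      simp [mul_comm]
    rw [h1, h2]
    ring
  have hkey : (27 * t : ℂ) = 40 + (4 * E1.card - 8 * E2.card) := by
    rw [← hmaster, hsplit, hsumE]
  have hcast : ((27 * t + 8 * E2.card : ℕ) : ℂ) = ((40 + 4 * E1.card : ℕ) : ℂ) := by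
    push_cast
    linear_combination hkey
  have hnat : 27 * t + 8 * E2.card = 40 + 4 * E1.card := Nat.cast_injective hcast
  rw [hfe]
  omega
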